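/- Fix H ∈ (0,1) and α, β > 0 with α + β = 1. There exists a constant K > 0 depending only on H and β such that for all a, b, c > 0: |(1/2)((a+b+c)^{2H} + b^{2H} − (a+b)^{2H} − (b+c)^{2H})| ≤ K (ac)^{β(H−1)+1} b^{2α(H−1)}. -/

import Mathlib

open Real Set

-- subadditivity of rpow for exponent in [0,1]
lemma rpow_subadd {q x y : ℝ} (hq0 : 0 ≤ q) (hq1 : q ≤ 1) (hx : 0 ≤ x) (hy : 0 ≤ y) :
    (x + y) ^ q ≤ x ^ q + y ^ q := by
  have := NNReal.rpow_add_le_add_rpow (x.toNNReal) (y.toNNReal) hq0 hq1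
  have h := NNReal.coe_le_coe.mpr this
  push_cast [NNReal.coe_rpow] at h
  rwa [Real.coe_toNNReal x hx, Real.coe_toNNReal y hy] at h

-- MVT for rpow
lemma mvt_rpow (q u v : ℝ) (hu : 0 < u) (huv : u < v) :
    ∃ ξ, u < ξ ∧ ξ < v ∧ v ^ q - u ^ q = q * ξ ^ (q - 1) * (v - u) := by
  obtain ⟨ξ, hξ, h⟩ := exists_hasDerivAt_eq_slope (fun x => x ^ q)
    (fun x => q * x ^ (q - 1)) huv
    (by
      apply ContinuousOn.rpow_const continuousOn_id
      intro x hx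
      exact Or.inl (ne_of_gt (lt_of_lt_of_le hu hx.1)))
    (fun x hx => Real.hasDerivAt_rpow_const (Or.inl (ne_of_gt (hu.trans hx.1))))
  refine ⟨ξ, hξ.1, hξ.2, ?_⟩
  rw [h, div_mul_cancel₀ _ (by linarith : v - u ≠ 0)]

-- first-level MVT identity
lemma mvt1 (p a b c : ℝ) (ha : 0 < a) (hb : 0 < b) (hc : 0 < c) :
    ∃ ξ, b < ξ ∧ ξ < a + b ∧
      (a + b + c) ^ p + b ^ p - (a + b) ^ p - (b + c) ^ p
        = p * a * ((ξ + c) ^ (p - 1) - ξ ^ (p - 1)) := by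
  obtain ⟨ξ, hξ, h⟩ := exists_hasDerivAt_eq_slope (fun x => (x + c) ^ p - x ^ p)
    (fun x => p * (x + c) ^ (p - 1) - p * x ^ (p - 1)) (show b < a + b by linarith)
    (by
      apply ContinuousOn.sub
      · apply ContinuousOn.rpow_const ((continuous_id.add continuous_const).continuousOn)
        intro x hx
        exact Or.inl (by nlinarith [hx.1] : x + c ≠ 0)
      · apply ContinuousOn.rpow_const continuousOn_id
        intro x hx
        exact Or.inl (by nlinarith [hx.1] : x ≠ 0))
    (fun x hx => by
      have hx0 : 0 < x := hb.trans hx.1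
      have h1 : HasDerivAt (fun y : ℝ => (y + c) ^ p) (1 * p * (x + c) ^ (p - 1)) x :=
        HasDerivAt.rpow_const ((hasDerivAt_id x).add_const c)
          (Or.inl (by positivity : x + c ≠ 0))
      have h2 : HasDerivAt (fun y : ℝ => y ^ p) (p * x ^ (p - 1)) x :=
        Real.hasDerivAt_rpow_const (Or.inl hx0.ne')
      rw [one_mul] at h1
      exact h1.sub h2)
  refine ⟨ξ, hξ.1, hξ.2, ?_⟩
  have hab : a + b - b = a := by ring
  rw [hab] at h
  have hX : (a + b + c) ^ p - (a + b) ^ p - ((b + c) ^ p - b ^ p)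
      = a * (p * (ξ + c) ^ (p - 1) - p * ξ ^ (p - 1)) := by
    rw [h]
    field_simp
  linear_combination hX

-- bound for the small exponent case
lemma Ebnd (p a b c : ℝ) (hp0 : 0 ≤ p) (hp1 : p ≤ 1) (ha : 0 < a) (hb : 0 < b) (hc : 0 < c) :
    |(a + b + c) ^ p + b ^ p - (a + b) ^ p - (b + c) ^ p| ≤ a ^ p := by
  have hX0 : b ^ p ≤ (a + b) ^ p := Real.rpow_le_rpow hb.le (by linarith) hp0
  have hX1 : (a + b) ^ p ≤ a ^ p + b ^ p := rpow_subadd hp0 hp1 ha.le hb.le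
  have hY0 : (b + c) ^ p ≤ (a + b + c) ^ p := Real.rpow_le_rpow (by linarith) (by linarith) hp0
  have hY1 : (a + b + c) ^ p ≤ a ^ p + (b + c) ^ p := by
    have := rpow_subadd hp0 hp1 ha.le (by linarith : (0:ℝ) ≤ b + c)
    rwa [show a + (b + c) = a + b + c from by ring] at this
  rw [abs_le]
  constructor <;> linarith

set_option maxHeartbeats 1000000 in
/-- The covariance bound in Case (iii): for `H ∈ (0,1)` and `α, β > 0` with `α + β = 1`,
there is a constant `K > 0` such that for all `a, b, c > 0`,
`|(1/2)((a+b+c)^{2H} + b^{2H} − (a+b)^{2H} − (b+c)^{2H})| ≤ K (ac)^{β(H−1)+1} b^{2α(H−1)}`. -/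
theorem mu_bound_case3 (H : ℝ) (hH0 : 0 < H) (hH1 : H < 1)
    (α β : ℝ) (hα : 0 < α) (hβ : 0 < β) (hαβ : α + β = 1) :
    ∃ K : ℝ, 0 < K ∧ ∀ a b c : ℝ, 0 < a → 0 < b → 0 < c →
      |(1 / 2) * ((a + b + c) ^ (2 * H) + b ^ (2 * H)
          - (a + b) ^ (2 * H) - (b + c) ^ (2 * H))|
        ≤ K * (a * c) ^ (β * (H - 1) + 1) * b ^ (2 * α * (H - 1)) := by
  refine ⟨1, one_pos, fun a b c ha hb hc => ?_⟩
  have hac : 0 < a * c := mul_pos ha hc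
  have hb2 : b ^ (2:ℝ) = b * b := by
    rw [show (2:ℝ) = ((2:ℕ):ℝ) by norm_num, Real.rpow_natCast]; ring
  obtain ⟨ξ₁, hξ₁b, hξ₁ab, h1⟩ := mvt1 (2 * H) a b c ha hb hc
  have hξ₁0 : 0 < ξ₁ := hb.trans hξ₁b
  obtain ⟨ξ₂, hξ₂1, hξ₂2, h2⟩ := mvt_rpow (2 * H - 1) ξ₁ (ξ₁ + c) hξ₁0 (by linarith)
  have hξ₂0 : 0 < ξ₂ := hξ₁0.trans hξ₂1
  rw [show (2 * H - 1 - 1 : ℝ) = 2 * H - 2 from by ring] at h2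
  have hEeq : (a + b + c) ^ (2 * H) + b ^ (2 * H)
      - (a + b) ^ (2 * H) - (b + c) ^ (2 * H)
      = 2 * H * (2 * H - 1) * a * c * ξ₂ ^ (2 * H - 2) := by
    rw [h1, h2]; ring
  rcases le_or_gt (a * c) (b * b) with hcase | hcase
  · -- small case: a*c ≤ b²
    have hts : ξ₂ ^ (2 * H - 2) ≤ b ^ (2 * H - 2) :=
      Real.rpow_le_rpow_of_nonpos hb (by linarith) (by linarith)
    have htpos : 0 < ξ₂ ^ (2 * H - 2) := Real.rpow_pos_of_pos hξ₂0 _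
    have hbpos : 0 < b ^ (2 * H - 2) := Real.rpow_pos_of_pos hb _
    have e1 : b ^ (2 * H - 2) = b ^ (2 * (β * (H - 1))) * b ^ (2 * α * (H - 1)) := by
      rw [← Real.rpow_add hb]
      congr 1
      linear_combination (2 - 2 * H) * hαβ
    have e2 : b ^ (2 * (β * (H - 1))) ≤ (a * c) ^ (β * (H - 1)) := by
      rw [Real.rpow_mul hb.le]
      apply Real.rpow_le_rpow_of_nonpos hac
      · rw [hb2]; exact hcase
      · nlinarith
    have e3 : (a * c) ^ (β * (H - 1)) * (a * c) = (a * c) ^ (β * (H - 1) + 1) := by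
      rw [Real.rpow_add hac, Real.rpow_one]
    have hRHS : a * c * b ^ (2 * H - 2)
        ≤ (a * c) ^ (β * (H - 1) + 1) * b ^ (2 * α * (H - 1)) := by
      calc a * c * b ^ (2 * H - 2)
          = (a * c * b ^ (2 * (β * (H - 1)))) * b ^ (2 * α * (H - 1)) := by rw [e1]; ring
        _ ≤ (a * c * (a * c) ^ (β * (H - 1))) * b ^ (2 * α * (H - 1)) := by
            apply mul_le_mul_of_nonneg_right _ (Real.rpow_nonneg hb.le _)
            exact mul_le_mul_of_nonneg_left e2 hac.le
        _ = (a * c) ^ (β * (H - 1) + 1) * b ^ (2 * α * (H - 1)) := by rw [← e3]; ring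
    rw [hEeq, abs_le]
    have hmm : a * c * ξ₂ ^ (2 * H - 2) ≤ a * c * b ^ (2 * H - 2) :=
      mul_le_mul_of_nonneg_left hts hac.le
    constructor
    · nlinarith [mul_pos hac htpos, sq_nonneg (4 * H - 1)]
    · nlinarith [mul_pos hac htpos, mul_pos (sub_pos.mpr hH1) (by linarith : (0:ℝ) < 2 * H + 1)]
  · -- big case: b² ≤ a*c
    have hX : (a * c) ^ H ≤ (a * c) ^ (β * (H - 1) + 1) * b ^ (2 * α * (H - 1)) := by
      have e1' : (a * c) ^ H = (a * c) ^ (β * (H - 1) + 1) * (a * c) ^ (α * (H - 1)) := by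
        rw [← Real.rpow_add hac]
        congr 1
        linear_combination (1 - H) * hαβ
      have e2' : (a * c) ^ (α * (H - 1)) ≤ b ^ (2 * α * (H - 1)) := by
        rw [show 2 * α * (H - 1) = 2 * (α * (H - 1)) from by ring, Real.rpow_mul hb.le]
        apply Real.rpow_le_rpow_of_nonpos (by positivity)
        · rw [hb2]; exact hcase.le
        · nlinarith
      rw [e1']
      exact mul_le_mul_of_nonneg_left e2' (Real.rpow_nonneg hac.le _)
    have hacH : 0 ≤ (a * c) ^ H := Real.rpow_nonneg hac.le _
    have hsq : ((a * c) ^ H) ^ 2 = (a * c) ^ (2 * H) := by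
      rw [pow_two, ← Real.rpow_add hac, show H + H = 2 * H from by ring]
    have key : |(a + b + c) ^ (2 * H) + b ^ (2 * H)
        - (a + b) ^ (2 * H) - (b + c) ^ (2 * H)| ≤ 2 * (a * c) ^ H := by
      set E := (a + b + c) ^ (2 * H) + b ^ (2 * H)
        - (a + b) ^ (2 * H) - (b + c) ^ (2 * H) with hEdef
      rcases le_or_gt H (1/2) with hH | hH
      · -- H ≤ 1/2 : |E| ≤ min(a,c)^{2H}
        have hEa : |E| ≤ a ^ (2 * H) := Ebnd (2 * H) a b c (by linarith) (by linarith) ha hb hc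
        have hEc : |E| ≤ c ^ (2 * H) := by
          have h' := Ebnd (2 * H) c b a (by linarith) (by linarith) hc hb ha
          rw [show c + b + a = a + b + c from by ring, show c + b = b + c from by ring,
            show b + a = a + b from by ring] at h'
          have : (a + b + c) ^ (2 * H) + b ^ (2 * H) - (b + c) ^ (2 * H) - (a + b) ^ (2 * H)
              = E := by rw [hEdef]; ring
          rwa [this] at h'
        have hsq2 : |E| ^ 2 ≤ (a * c) ^ (2 * H) := by
          rw [Real.mul_rpow ha.le hc.le, sq]
          exact mul_le_mul hEa hEc (abs_nonneg _) (Real.rpow_nonneg ha.le _)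
        have : |E| ≤ (a * c) ^ H := by
          calc |E| = √(|E| ^ 2) := (Real.sqrt_sq (abs_nonneg _)).symm
            _ ≤ √(((a * c) ^ H) ^ 2) := Real.sqrt_le_sqrt (by rw [hsq]; exact hsq2)
            _ = (a * c) ^ H := Real.sqrt_sq hacH
        nlinarith
      · -- H > 1/2 : 0 ≤ E and product bound
        have hE0 : 0 ≤ E := by
          rw [hEeq]
          have ht := (Real.rpow_pos_of_pos hξ₂0 (2 * H - 2)).le
          have h2H : (0:ℝ) ≤ 2 * H - 1 := by linarith
          exact mul_nonneg (mul_nonneg (mul_nonneg (mul_nonneg (by linarith) h2H) ha.le) hc.le) ht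
        have hEa : E ≤ 2 * H * a * c ^ (2 * H - 1) := by
          rw [h1]
          have hsub : (ξ₁ + c) ^ (2 * H - 1) ≤ ξ₁ ^ (2 * H - 1) + c ^ (2 * H - 1) :=
            rpow_subadd (by linarith) (by linarith) hξ₁0.le hc.le
          exact mul_le_mul_of_nonneg_left (by linarith) (by positivity)
        have hEc : E ≤ 2 * H * c * a ^ (2 * H - 1) := by
          obtain ⟨η, hηb, hηab, h1'⟩ := mvt1 (2 * H) c b a hc hb ha
          have hη0 : 0 < η := hb.trans hηb
          rw [show c + b + a = a + b + c from by ring, show c + b = b + c from by ring,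
            show b + a = a + b from by ring] at h1'
          have hE' : E = 2 * H * c * ((η + a) ^ (2 * H - 1) - η ^ (2 * H - 1)) := by
            rw [hEdef, ← h1']; ring
          rw [hE']
          have hsub : (η + a) ^ (2 * H - 1) ≤ η ^ (2 * H - 1) + a ^ (2 * H - 1) :=
            rpow_subadd (by linarith) (by linarith) hη0.le ha.le
          have : (η + a) ^ (2 * H - 1) - η ^ (2 * H - 1) ≤ a ^ (2 * H - 1) := by linarith
          exact mul_le_mul_of_nonneg_left this (by positivity)
        have hprod : (2 * H * a * c ^ (2 * H - 1)) * (2 * H * c * a ^ (2 * H - 1))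
            = (2 * H) ^ 2 * (a * c) ^ (2 * H) := by
          rw [Real.mul_rpow ha.le hc.le,
            show (2*H*a*c^(2*H-1))*(2*H*c*a^(2*H-1))
              = (2*H)^2 * ((a * a^(2*H-1)) * (c * c^(2*H-1))) from by ring]
          congr 1
          rw [show a * a ^ (2*H-1) = a ^ (1:ℝ) * a ^ (2*H-1) from by rw [Real.rpow_one],
            ← Real.rpow_add ha,
            show c * c ^ (2*H-1) = c ^ (1:ℝ) * c ^ (2*H-1) from by rw [Real.rpow_one],
            ← Real.rpow_add hc]
          ring_nf
        have hEsq : E ^ 2 ≤ (2 * H * (a * c) ^ H) ^ 2 := by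
          have h01 : 0 ≤ 2 * H * a * c ^ (2 * H - 1) := by positivity
          have := mul_le_mul hEa hEc hE0 h01
          calc E ^ 2 = E * E := pow_two E
            _ ≤ (2 * H * a * c ^ (2 * H - 1)) * (2 * H * c * a ^ (2 * H - 1)) := this
            _ = (2 * H) ^ 2 * (a * c) ^ (2 * H) := hprod
            _ = (2 * H * (a * c) ^ H) ^ 2 := by rw [← hsq]; ring
        have hM : (0:ℝ) ≤ 2 * H * (a * c) ^ H := by positivity
        have : E ≤ 2 * H * (a * c) ^ H := by
          calc E = √(E ^ 2) := (Real.sqrt_sq hE0).symm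
            _ ≤ √((2 * H * (a * c) ^ H) ^ 2) := Real.sqrt_le_sqrt hEsq
            _ = 2 * H * (a * c) ^ H := Real.sqrt_sq hM
        rw [abs_of_nonneg hE0]
        nlinarith
    calc |1 / 2 * ((a + b + c) ^ (2 * H) + b ^ (2 * H)
          - (a + b) ^ (2 * H) - (b + c) ^ (2 * H))|
        = 1 / 2 * |(a + b + c) ^ (2 * H) + b ^ (2 * H)
          - (a + b) ^ (2 * H) - (b + c) ^ (2 * H)| := by
          rw [abs_mul]; norm_num
      _ ≤ (a * c) ^ H := by linarith
      _ ≤ 1 * (a * c) ^ (β * (H - 1) + 1) * b ^ (2 * α * (H - 1)) := by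
          rw [one_mul]; exact hX
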